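/- Dual feasibility of the Riccati solution for the lower-value SDP: assume P* is a symmetric n×n matrix with 𝓡(P*) = 0, and set L* = γ⁻²B_wᵀP*. Then the (n+m)×(n+m) block matrix with blocks [(A+B_wL*)ᵀP* + P*(A+B_wL*) + Q − γ²(L*)ᵀL*, P*B; BᵀP*, R] equals the block matrix [P*BR⁻¹BᵀP*, P*B; BᵀP*, R], and this matrix is positive semidefinite. -/

import Mathlib

open Matrix

/-- Dual feasibility of the Riccati solution for the lower-value SDP. -/
theorem lower_value_dual_feasibility {n m p : ℕ}
    (A : Matrix (Fin n) (Fin n) ℝ) (B : Matrix (Fin n) (Fin m) ℝ)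
    (Bw : Matrix (Fin n) (Fin p) ℝ)
    (Q : Matrix (Fin n) (Fin n) ℝ) (hQ : Q.IsSymm)
    (R : Matrix (Fin m) (Fin m) ℝ) (hR : R.PosDef) (hRsymm : R.IsSymm)
    (γ : ℝ) (hγ : 0 < γ)
    (Ps : Matrix (Fin n) (Fin n) ℝ) (hPs : Ps.IsSymm)
    (hARE : Aᵀ * Ps + Ps * A + Q - Ps * B * R⁻¹ * Bᵀ * Ps
      + (γ ^ 2)⁻¹ • (Ps * Bw * Bwᵀ * Ps) = 0) :
    -- with L* = γ⁻²B_wᵀP*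
    (let Ls := (γ ^ 2)⁻¹ • (Bwᵀ * Ps)
     let M : Matrix (Fin n ⊕ Fin m) (Fin n ⊕ Fin m) ℝ :=
       fromBlocks
         ((A + Bw * Ls)ᵀ * Ps + Ps * (A + Bw * Ls) + Q - γ ^ 2 • (Lsᵀ * Ls))
         (Ps * B) (Bᵀ * Ps) R
     M = fromBlocks (Ps * B * R⁻¹ * Bᵀ * Ps) (Ps * B) (Bᵀ * Ps) R ∧
       M.PosSemidef) := by
  intro Ls M
  have hγ2 : (γ ^ 2 : ℝ) ≠ 0 := by positivity
  have hPsT : Psᵀ = Ps := hPs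
  have h2 : Aᵀ * Ps + Ps * A + Q + (γ ^ 2)⁻¹ • (Ps * Bw * Bwᵀ * Ps)
      = Ps * B * R⁻¹ * Bᵀ * Ps := by
    have h := hARE
    rw [sub_add_eq_add_sub, sub_eq_zero] at h
    exact h
  have hTL : (A + Bw * Ls)ᵀ * Ps + Ps * (A + Bw * Ls) + Q - γ ^ 2 • (Lsᵀ * Ls)
      = Ps * B * R⁻¹ * Bᵀ * Ps := by
    have hLsT : Lsᵀ = (γ ^ 2)⁻¹ • (Ps * Bw) := by
      simp [Ls, transpose_smul, transpose_mul, hPsT]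
    have e1 : (Bw * Ls)ᵀ * Ps = (γ ^ 2)⁻¹ • (Ps * Bw * Bwᵀ * Ps) := by
      rw [transpose_mul, hLsT, Matrix.smul_mul, Matrix.smul_mul]
    have e2 : Ps * (Bw * Ls) = (γ ^ 2)⁻¹ • (Ps * Bw * Bwᵀ * Ps) := by
      rw [show Ls = (γ ^ 2)⁻¹ • (Bwᵀ * Ps) from rfl, Matrix.mul_smul,
        Matrix.mul_smul, ← Matrix.mul_assoc, ← Matrix.mul_assoc]
    have e3 : (γ ^ 2 : ℝ) • (Lsᵀ * Ls) = (γ ^ 2)⁻¹ • (Ps * Bw * Bwᵀ * Ps) := by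
      have hs : (γ ^ 2 : ℝ) * (γ ^ 2)⁻¹ * (γ ^ 2)⁻¹ = (γ ^ 2)⁻¹ := by field_simp
      rw [hLsT, show Ls = (γ ^ 2)⁻¹ • (Bwᵀ * Ps) from rfl, Matrix.smul_mul,
        Matrix.mul_smul, smul_smul, smul_smul, hs, ← Matrix.mul_assoc]
    rw [transpose_add, add_mul, mul_add, e1, e2, e3, ← h2]
    abel
  have hEq : M = fromBlocks (Ps * B * R⁻¹ * Bᵀ * Ps) (Ps * B) (Bᵀ * Ps) R := by
    rw [show M = fromBlocks
        ((A + Bw * Ls)ᵀ * Ps + Ps * (A + Bw * Ls) + Q - γ ^ 2 • (Lsᵀ * Ls))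
        (Ps * B) (Bᵀ * Ps) R from rfl, hTL]
  refine ⟨hEq, ?_⟩
  rw [hEq]
  have hCT : Bᵀ * Ps = (Ps * B)ᴴ := by
    ext i j
    simp only [conjTranspose_apply, transpose_apply, mul_apply, RCLike.star_def,
      starRingEnd_apply, star_trivial]
    exact Finset.sum_congr rfl fun x _ => by rw [hPs.apply, mul_comm]
  rw [hCT]
  haveI := hR.isUnit.invertible
  rw [PosDef.fromBlocks₂₂ _ _ hR]
  have hz : Ps * B * R⁻¹ * Bᵀ * Ps - Ps * B * R⁻¹ * (Ps * B)ᴴ = 0 := by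
    rw [← hCT, sub_eq_zero]
    exact Matrix.mul_assoc _ _ _
  rw [hz]
  exact PosSemidef.zero
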